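/- Let x, y, z ∈ ℝ² with y ≠ x, |x − y| = |x − z|, and let w = (y + z)/2 be the midpoint of the segment from y to z, with w ≠ x. Let e₁ = (y − x)/|x − y| and e₃ = (w − x)/|x − w|. Then |e₁ − e₃| < |y − z| / |x − y|, provided y ≠ z. -/

import Mathlib

open scoped RealInnerProductSpace

lemma stmt_5_aux (r a h L : ℝ) (hrpos : 0 < r) (hapos : 0 < a) (hhpos : 0 < h)
    (hr2 : r ^ 2 = a ^ 2 + h ^ 2) (hL0 : 0 ≤ L) (hLsq : L ^ 2 = 2 - 2 * a / r) :
    L < 2 * h / r := by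
  have hrhs : 0 ≤ 2 * h / r := by positivity
  refine lt_of_pow_lt_pow_left₀ 2 hrhs ?_
  rw [hLsq, div_pow]
  have h1 : 2 - 2 * a / r = (2 * r - 2 * a) / r := by field_simp
  rw [h1, div_lt_div_iff₀ hrpos (by positivity)]
  have hra' : a < r := by nlinarith
  nlinarith [mul_pos (mul_pos hrpos (sub_pos.mpr hra'))
    (by positivity : (0:ℝ) < r + 2 * a)]

theorem stmt_5 (x y z : EuclideanSpace ℝ (Fin 2))
    (hyx : y ≠ x) (hyz : y ≠ z)
    (hdist : ‖x - y‖ = ‖x - z‖)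
    (hwx : (1/2 : ℝ) • (y + z) ≠ x) :
    ‖(‖x - y‖)⁻¹ • (y - x) -
        (‖x - (1/2 : ℝ) • (y + z)‖)⁻¹ • ((1/2 : ℝ) • (y + z) - x)‖ <
      ‖y - z‖ / ‖x - y‖ := by
  set w := (1/2 : ℝ) • (y + z) with hw
  have hyx' : y - x = (w - x) + (1/2 : ℝ) • (y - z) := by
    rw [hw]; module
  have hzx' : z - x = (w - x) - (1/2 : ℝ) • (y - z) := by
    rw [hw]; module
  set v := w - x with hv
  set c := (1/2 : ℝ) • (y - z) with hc
  have hr : ‖x - y‖ = ‖v + c‖ := by rw [norm_sub_rev, hyx']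
  have hra : ‖x - w‖ = ‖v‖ := by rw [norm_sub_rev]
  have hdist' : ‖v + c‖ = ‖v - c‖ := by
    rw [← hr, ← hzx', ← norm_sub_rev x z]; exact hdist
  have hortho : ⟪v, c⟫ = 0 := by
    have h1 := norm_add_sq_real v c
    have h2 := norm_sub_sq_real v c
    rw [hdist'] at h1
    nlinarith [h1, h2]
  have hinner : ⟪v + c, v⟫ = ‖v‖ ^ 2 := by
    rw [inner_add_left, real_inner_self_eq_norm_sq, real_inner_comm, hortho]
    ring
  have hr2 : ‖v + c‖ ^ 2 = ‖v‖ ^ 2 + ‖c‖ ^ 2 := by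
    rw [norm_add_sq_real, hortho]; ring
  set r := ‖v + c‖ with hrdef
  set a := ‖v‖ with hadef
  have hrpos : 0 < r := by
    rw [hrdef, ← hyx']; exact norm_pos_iff.mpr (sub_ne_zero.mpr hyx)
  have hapos : 0 < a :=
    norm_pos_iff.mpr (hv ▸ sub_ne_zero.mpr hwx)
  have hcpos : 0 < ‖c‖ :=
    norm_pos_iff.mpr (hc ▸ smul_ne_zero (by norm_num) (sub_ne_zero.mpr hyz))
  have hdnorm : ‖y - z‖ = 2 * ‖c‖ := by
    rw [hc, norm_smul]; simp
  have hLsq : ‖r⁻¹ • (v + c) - a⁻¹ • v‖ ^ 2 = 2 - 2 * a / r := by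
    rw [norm_sub_sq_real, inner_smul_left, inner_smul_right, hinner,
      norm_smul, norm_smul]
    simp only [norm_inv, norm_norm, RCLike.conj_to_real]
    rw [← hrdef, ← hadef]
    field_simp
    ring_nf
    rw [Real.norm_of_nonneg hrpos.le, Real.norm_of_nonneg hapos.le]
    field_simp
    ring
  -- final numeric step
  have hgoal : ‖r⁻¹ • (v + c) - a⁻¹ • v‖ < ‖y - z‖ / r := by
    rw [hdnorm]
    exact stmt_5_aux r a ‖c‖ _ hrpos hapos hcpos hr2 (norm_nonneg _) hLsq
  calc ‖(‖x - y‖)⁻¹ • (y - x) - (‖x - w‖)⁻¹ • (w - x)‖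
      = ‖r⁻¹ • (v + c) - a⁻¹ • v‖ := by rw [hr, hra, hyx']
    _ < ‖y - z‖ / r := hgoal
    _ = ‖y - z‖ / ‖x - y‖ := by rw [hr]
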